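/- A zero z₀ of f(z) = r(z) - conj(z) with |r'(z₀)| ≤ 1 is an attracting or rationally neutral fixed point of R = conj(r) ∘ r, i.e., R(z₀) = z₀ and |R'(z₀)| ≤ 1. -/

import Mathlib

open Filter Topology

lemma hasDerivAt_conj_conj (r : ℂ → ℂ) (d w : ℂ)
    (h : HasDerivAt r d ((starRingEnd ℂ) w)) :
    HasDerivAt (fun z => (starRingEnd ℂ) (r ((starRingEnd ℂ) z))) ((starRingEnd ℂ) d) w := by
  rw [hasDerivAt_iff_tendsto_slope] at h ⊢
  have hct : Tendsto (starRingEnd ℂ) (𝓝[≠] w) (𝓝[≠] ((starRingEnd ℂ) w)) := by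
    refine Filter.Tendsto.inf (Complex.continuous_conj.tendsto w) ?_
    refine tendsto_principal_principal.mpr fun x hx => ?_
    simp only [Set.mem_compl_iff, Set.mem_singleton_iff] at hx ⊢
    intro hc
    exact hx (by simpa using congrArg (starRingEnd ℂ) hc)
  have := (Complex.continuous_conj.tendsto d).comp (h.comp hct)
  refine this.congr fun z => ?_
  simp only [Function.comp_apply, slope, vsub_eq_sub, map_mul, map_inv₀, map_sub,
    Complex.conj_conj, smul_eq_mul]

/-- A zero `z₀` of `f(z) = r(z) - conj z` with `|r'(z₀)| ≤ 1` is an attracting or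
rationally neutral fixed point of `R = conj(r) ∘ r`: `R z₀ = z₀` and `|R'(z₀)| ≤ 1`. -/
theorem nonSensePreserving_zero_attracting (r : ℂ → ℂ) (z₀ d : ℂ)
    (hzero : r z₀ - (starRingEnd ℂ) z₀ = 0)
    (hd : HasDerivAt r d z₀) (hd1 : ‖d‖ ≤ 1) :
    (starRingEnd ℂ) (r ((starRingEnd ℂ) (r z₀))) = z₀ ∧
      ∃ D : ℂ, HasDerivAt (fun z => (starRingEnd ℂ) (r ((starRingEnd ℂ) (r z)))) D z₀ ∧
        ‖D‖ ≤ 1 := by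
  have hfix : r z₀ = (starRingEnd ℂ) z₀ := sub_eq_zero.mp hzero
  have hfix' : (starRingEnd ℂ) (r z₀) = z₀ := by rw [hfix]; simp
  constructor
  · rw [hfix', hfix]; simp
  · have hg : HasDerivAt (fun z => (starRingEnd ℂ) (r ((starRingEnd ℂ) z)))
        ((starRingEnd ℂ) d) (r z₀) := by
      apply hasDerivAt_conj_conj
      rwa [hfix']
    have := hg.comp z₀ hd
    exact ⟨_, this, by
      rw [norm_mul]
      simpa using mul_le_one₀ hd1 (norm_nonneg d) hd1⟩
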